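/- Let (M, g) be the D-dimensional static metric ds² = −f(r) dt² + g(r) dr² + r² (dχ² + s²(χ) dΩ²_{D−3}) with f > 0, g > 0 and s(χ) = sin χ, χ, or sinh χ, and suppose the constant-radius hypersurface S_{r_c} is a photon surface, i.e. (f r^{−2})′ = 0 at r = r_c. Then, with the foliation by constant-r hypersurfaces (which is a Gaussian normal foliation adapted to S_{r_c} up to reparametrization of r) and unit normal n, the normal derivative of the trace-free second fundamental form on S_{r_c} in the orthonormal tetrad satisfies ∇_n σ_{(μ)(ν)} = −(1/(2(D−1))) ((f r^{−2})″/(f r^{−2})) g^{−1} M_{(μ)(ν)}, where M_{(μ)(ν)} = diag[D−2, 0, 1, ..., 1]. Consequently, since k^{(μ)} k^{(ν)} M_{(μ)(ν)} > 0 for every null k tangent to S_{r_c}, the photon surface S_{r_c} is stable, unstable, or marginally stable if and only if (f r^{−2})″ > 0, < 0, or = 0 at r = r_c respectively. -/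

import Mathlib

set_option autoImplicit false
noncomputable section

/-- Diagonal components `g_{μμ}` of the `D`-dimensional static metric
`ds² = −f(r) dt² + g(r) dr² + r² (dχ² + s²(χ) dΩ²_{D−3})`
in the coordinates `(x 0, x 1, x 2, x 3, …) = (t, r, χ, θ₁, …, θ_{D−3})`,
where `dΩ²_{D−3}` is the round metric of the unit `(D−3)`-sphere. -/
def metricComp (f gg s : ℝ → ℝ) (μ : ℕ) (x : ℕ → ℝ) : ℝ :=
  if μ = 0 then - f (x 1)
  else if μ = 1 then gg (x 1)
  else if μ = 2 then (x 1) ^ 2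
  else (x 1) ^ 2 * (s (x 2)) ^ 2 * ∏ j ∈ Finset.Ico 3 μ, (Real.sin (x j)) ^ 2

/-- components of the induced (tetrad) Minkowski metric `h_{(μ)(ν)}` tangent to a
constant-radius hypersurface; the normal direction `μ = 1` is excluded -/
def etaTangent (μ ν : ℕ) : ℝ :=
  if μ = ν then (if μ = 0 then (-1 : ℝ) else if μ = 1 then 0 else 1) else 0

/-- Components `χ_{(μ)(ν)}` of the second fundamental form of the constant-radius
hypersurface `S_r` with unit normal `n = √g dr`, in the orthonormal tetrad
`e_{(μ)} ∝ ∂_μ`: the diagonal formula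
`χ_{(μ)(μ)} = ∂_r g_{μμ} / (2 √(g_{rr}) |g_{μμ}|)` (off-diagonal components vanish). -/
def chiTetrad (f gg s : ℝ → ℝ) (μ : ℕ) (x : ℕ → ℝ) : ℝ :=
  if μ = 1 then 0
  else (2 * Real.sqrt (gg (x 1)))⁻¹ *
    deriv (fun r => metricComp f gg s μ (Function.update x 1 r)) (x 1)
      / |metricComp f gg s μ x|

/-- the trace `Θ = h^{(μ)(ν)} χ_{(μ)(ν)}` of the second fundamental form of `S_r` -/
def thetaTetrad (D : ℕ) (f gg s : ℝ → ℝ) (x : ℕ → ℝ) : ℝ :=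
  ∑ μ ∈ Finset.range D, etaTangent μ μ * chiTetrad f gg s μ x

/-- the trace-free part `σ_{(μ)(ν)} = χ_{(μ)(ν)} − Θ h_{(μ)(ν)}/(D−1)` of the second
fundamental form of `S_r`, in the orthonormal tetrad -/
def sigmaTetrad (D : ℕ) (f gg s : ℝ → ℝ) (μ ν : ℕ) (x : ℕ → ℝ) : ℝ :=
  (if μ = ν then chiTetrad f gg s μ x else 0)
    - thetaTetrad D f gg s x / ((D : ℝ) - 1) * etaTangent μ ν

/-- the matrix `M_{(μ)(ν)} = diag[D−2, 0, 1, …, 1]` -/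
def Mdiag (D : ℕ) (μ ν : ℕ) : ℝ :=
  if μ = ν then (if μ = 0 then (D : ℝ) - 2 else if μ = 1 then 0 else 1) else 0

/-- a point in the coordinate domain, off the symmetry axis -/
def RegularPoint (D : ℕ) (s : ℝ → ℝ) (x : ℕ → ℝ) : Prop :=
  0 < x 1 ∧ s (x 2) ≠ 0 ∧ ∀ j : ℕ, 3 ≤ j → j < D → Real.sin (x j) ≠ 0

/-- tetrad components of `∇_n σ` for the foliation by constant-radius hypersurfaces
(a Gaussian normal foliation up to reparametrisation of `r`), with unit normal
`n = g^{−1/2} ∂_r` -/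
def nablaNSigmaTetrad (D : ℕ) (f gg s : ℝ → ℝ) (μ ν : ℕ) (x : ℕ → ℝ) : ℝ :=
  (Real.sqrt (gg (x 1)))⁻¹ *
    deriv (fun r => sigmaTetrad D f gg s μ ν (Function.update x 1 r)) (x 1)

/-- tetrad components of a nonzero null vector `k` tangent to the constant-radius
hypersurface -/
def NullTangentTetrad (D : ℕ) (k : ℕ → ℝ) : Prop :=
  (∃ μ < D, k μ ≠ 0) ∧ k 1 = 0 ∧ (∀ μ : ℕ, D ≤ μ → k μ = 0) ∧
  (∑ μ ∈ (Finset.range D).erase 0, (k μ) ^ 2) = (k 0) ^ 2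

/-- For the `D`-dimensional static metric
`ds² = −f dt² + g dr² + r²(dχ² + s²(χ) dΩ²_{D−3})`, suppose the constant-radius
hypersurface `S_{r_c}` is a photon surface, i.e. `(f r⁻²)′ = 0` at `r = r_c`.  Then,
with the foliation by constant-`r` hypersurfaces and unit normal `n`, on `S_{r_c}`
`∇_n σ_{(μ)(ν)} = −(1/(2(D−1))) ((f r⁻²)″/(f r⁻²)) g⁻¹ M_{(μ)(ν)}`,
`M = diag[D−2, 0, 1, …, 1]`.  Consequently, since `k^{(μ)} k^{(ν)} M_{(μ)(ν)} > 0` for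
every null `k` tangent to `S_{r_c}`, the photon surface `S_{r_c}` is stable, unstable,
or marginally stable (i.e. `k^a k^b ∇_n σ_{ab} < 0`, `> 0`, `= 0` for all such `k`)
iff `(f r⁻²)″ > 0`, `< 0`, or `= 0` at `r = r_c` respectively. -/
theorem stability_of_constant_radius_photon_surface {D : ℕ} (hD : 3 ≤ D)
    (f gg s : ℝ → ℝ)
    (hs : s = Real.sin ∨ s = (fun χ => χ) ∨ s = Real.sinh)
    (hf : ∀ r > 0, 0 < f r) (hgg : ∀ r > 0, 0 < gg r)
    (hfC : ContDiff ℝ 2 f) (hggC : ContDiff ℝ 1 gg)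
    (x : ℕ → ℝ) (hx : RegularPoint D s x)
    -- `S_{r_c}` (with `r_c = x 1`) is a photon surface
    (hps : deriv (fun r => f r / r ^ 2) (x 1) = 0) :
    (∀ μ < D, ∀ ν < D,
      nablaNSigmaTetrad D f gg s μ ν x
        = - (2 * ((D : ℝ) - 1))⁻¹
            * (deriv (deriv (fun r => f r / r ^ 2)) (x 1) / (f (x 1) / (x 1) ^ 2))
            * (gg (x 1))⁻¹ * Mdiag D μ ν)
    ∧ (∀ k : ℕ → ℝ, NullTangentTetrad D k →
        0 < ∑ μ ∈ Finset.range D, ∑ ν ∈ Finset.range D, k μ * k ν * Mdiag D μ ν)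
    ∧ ((∀ k : ℕ → ℝ, NullTangentTetrad D k →
        ∑ μ ∈ Finset.range D, ∑ ν ∈ Finset.range D,
          k μ * k ν * nablaNSigmaTetrad D f gg s μ ν x < 0)
        ↔ 0 < deriv (deriv (fun r => f r / r ^ 2)) (x 1))
    ∧ ((∀ k : ℕ → ℝ, NullTangentTetrad D k →
        0 < ∑ μ ∈ Finset.range D, ∑ ν ∈ Finset.range D,
          k μ * k ν * nablaNSigmaTetrad D f gg s μ ν x)
        ↔ deriv (deriv (fun r => f r / r ^ 2)) (x 1) < 0)
    ∧ ((∀ k : ℕ → ℝ, NullTangentTetrad D k →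
        ∑ μ ∈ Finset.range D, ∑ ν ∈ Finset.range D,
          k μ * k ν * nablaNSigmaTetrad D f gg s μ ν x = 0)
        ↔ deriv (deriv (fun r => f r / r ^ 2)) (x 1) = 0) := by
  obtain ⟨hr0, hs2, hsj⟩ := hx
  have hD2 : (2:ℝ) ≤ (D:ℝ) - 1 := by
    have : (3:ℝ) ≤ (D:ℝ) := by exact_mod_cast hD
    linarith
  have hDpos : (0:ℝ) < (D:ℝ) - 1 := by linarith
  have hDne : ((D:ℝ) - 1) ≠ 0 := ne_of_gt hDpos
  have hfr0 : 0 < f (x 1) := hf _ hr0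
  have hgr0 : 0 < gg (x 1) := hgg _ hr0
  have hrne : x 1 ≠ 0 := ne_of_gt hr0
  -- differentiability facts
  have hdf : ∀ r : ℝ, HasDerivAt f (deriv f r) r := fun r =>
    ((hfC.differentiable (by norm_num)) r).hasDerivAt
  have hfC1 : ContDiff ℝ 1 (deriv f) := by
    have hc2 : ContDiff ℝ ((1:ℕ)+1) f := by exact_mod_cast hfC
    exact_mod_cast (contDiff_succ_iff_deriv.mp hc2).2.2
  have hdf' : ∀ r : ℝ, HasDerivAt (deriv f) (deriv (deriv f) r) r := fun r =>
    ((hfC1.differentiable (by norm_num)) r).hasDerivAt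
  have hdg : HasDerivAt gg (deriv gg (x 1)) (x 1) :=
    ((hggC.differentiable (by norm_num)) (x 1)).hasDerivAt
  -- metric components along the radial curve
  have hupd : ∀ r r' : ℝ, Function.update (Function.update x 1 r) 1 r' = Function.update x 1 r' :=
    fun r r' => Function.update_idem ..
  have hm0 : ∀ r : ℝ, metricComp f gg s 0 (Function.update x 1 r) = - f r := by
    intro r; simp [metricComp]
  have hm2 : ∀ r : ℝ, metricComp f gg s 2 (Function.update x 1 r) = r ^ 2 := by
    intro r; simp [metricComp]
  have hm3 : ∀ μ : ℕ, 3 ≤ μ → ∀ r : ℝ, metricComp f gg s μ (Function.update x 1 r)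
      = r ^ 2 * ((s (x 2)) ^ 2 * ∏ j ∈ Finset.Ico 3 μ, (Real.sin (x j)) ^ 2) := by
    intro μ hμ r
    have h0 : μ ≠ 0 := by omega
    have h1 : μ ≠ 1 := by omega
    have h2 : μ ≠ 2 := by omega
    simp only [metricComp, h0, h1, h2, if_false, Function.update_self,
      Function.update_of_ne (show (2:ℕ) ≠ 1 by norm_num)]
    rw [mul_assoc]
    congr 2
    refine Finset.prod_congr rfl fun j hj => ?_
    have : j ≠ 1 := by have := (Finset.mem_Ico.mp hj).1; omega
    rw [Function.update_of_ne this]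
  have hCpos : ∀ μ : ℕ, 3 ≤ μ → μ ≤ D →
      0 < (s (x 2)) ^ 2 * ∏ j ∈ Finset.Ico 3 μ, (Real.sin (x j)) ^ 2 := by
    intro μ h3 hμ
    apply mul_pos
    · exact lt_of_le_of_ne (sq_nonneg _) (Ne.symm (pow_ne_zero 2 hs2))
    · refine Finset.prod_pos fun j hj => ?_
      obtain ⟨hj3, hjμ⟩ := Finset.mem_Ico.mp hj
      exact lt_of_le_of_ne (sq_nonneg _) (Ne.symm (pow_ne_zero 2 (hsj j hj3 (by omega))))
  -- the second fundamental form along the radial curve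
  have hchi : ∀ r : ℝ, 0 < r → ∀ μ : ℕ, μ ≤ D → chiTetrad f gg s μ (Function.update x 1 r)
      = (2 * Real.sqrt (gg r))⁻¹ *
        (if μ = 0 then - deriv f r / f r else if μ = 1 then 0 else 2 / r) := by
    intro r hr μ hμ
    have hrne' : r ≠ 0 := ne_of_gt hr
    have hsqne : Real.sqrt (gg r) ≠ 0 := ne_of_gt (Real.sqrt_pos.mpr (hgg r hr))
    match μ, hμ with
    | 0, _ =>
      have hfun : (fun r' => metricComp f gg s 0 (Function.update (Function.update x 1 r) 1 r'))
          = fun r' => - f r' := by funext r'; rw [hupd, hm0]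
      simp only [chiTetrad, if_neg (by norm_num : ¬ (0:ℕ) = 1), Function.update_self, hfun, hm0]
      rw [deriv.fun_neg, abs_neg, abs_of_pos (hf r hr)]
      simp only [if_true]
      ring
    | 1, _ => simp [chiTetrad]
    | 2, _ =>
      have hfun : (fun r' => metricComp f gg s 2 (Function.update (Function.update x 1 r) 1 r'))
          = fun r' => r' ^ 2 := by funext r'; rw [hupd, hm2]
      simp only [chiTetrad, if_neg (by norm_num : ¬ (2:ℕ) = 1), Function.update_self, hfun, hm2]
      rw [(hasDerivAt_pow 2 r).deriv, abs_of_pos (pow_pos hr 2)]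
      rw [show ((2:ℕ):ℝ) * r ^ (2-1) = 2 * r by norm_num]
      rw [div_eq_iff (ne_of_gt (pow_pos hr 2))]
      simp only [show (2:ℕ) ≠ 0 by norm_num, show (2:ℕ) ≠ 1 by norm_num, if_false]
      field_simp [hrne', hsqne]
    | (n+3), hμ =>
      have hCp : 0 < (s (x 2)) ^ 2 * ∏ j ∈ Finset.Ico 3 (n+3), (Real.sin (x j)) ^ 2 :=
        hCpos (n+3) (by omega) hμ
      have hfun : (fun r' => metricComp f gg s (n+3) (Function.update (Function.update x 1 r) 1 r'))
          = fun r' => r' ^ 2 * ((s (x 2)) ^ 2 * ∏ j ∈ Finset.Ico 3 (n+3), (Real.sin (x j)) ^ 2) := by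
        funext r'; rw [hupd, hm3 (n+3) (by omega)]
      have hd : deriv (fun r' : ℝ => r' ^ 2 *
          ((s (x 2)) ^ 2 * ∏ j ∈ Finset.Ico 3 (n+3), (Real.sin (x j)) ^ 2)) r
          = 2 * r * ((s (x 2)) ^ 2 * ∏ j ∈ Finset.Ico 3 (n+3), (Real.sin (x j)) ^ 2) := by
        have := ((hasDerivAt_pow 2 r).mul_const
          ((s (x 2)) ^ 2 * ∏ j ∈ Finset.Ico 3 (n+3), (Real.sin (x j)) ^ 2)).deriv
        simpa using this
      simp only [chiTetrad, if_neg (by omega : ¬ n+3 = 1), Function.update_self, hfun,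
        hm3 (n+3) (by omega), hd, if_neg (by omega : ¬ n+3 = 0)]
      rw [abs_of_pos (by positivity), div_eq_iff (ne_of_gt (by positivity))]
      field_simp [hrne', hsqne]
  -- the trace along the radial curve
  have htheta : ∀ r : ℝ, 0 < r → thetaTetrad D f gg s (Function.update x 1 r)
      = (2 * Real.sqrt (gg r))⁻¹ * (deriv f r / f r + ((D:ℝ) - 2) * (2 / r)) := by
    intro r hr
    have h1 : thetaTetrad D f gg s (Function.update x 1 r)
        = ∑ μ ∈ Finset.range D, etaTangent μ μ *
          ((2 * Real.sqrt (gg r))⁻¹ *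
            (if μ = 0 then - deriv f r / f r else if μ = 1 then 0 else 2 / r)) := by
      refine Finset.sum_congr rfl fun μ hμ => ?_
      rw [hchi r hr μ (le_of_lt (Finset.mem_range.mp hμ))]
    rw [h1, Finset.range_eq_Ico, ← Finset.sum_Ico_consecutive _ (Nat.zero_le 2) (by omega : 2 ≤ D)]
    rw [← Finset.range_eq_Ico]
    have hterm : ∀ μ ∈ Finset.Ico 2 D, etaTangent μ μ *
        ((2 * Real.sqrt (gg r))⁻¹ *
          (if μ = 0 then - deriv f r / f r else if μ = 1 then 0 else 2 / r))
        = (2 * Real.sqrt (gg r))⁻¹ * (2 / r) := by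
      intro μ hμ
      obtain ⟨h2μ, _⟩ := Finset.mem_Ico.mp hμ
      have he : etaTangent μ μ = 1 := by
        unfold etaTangent; rw [if_pos rfl, if_neg (by omega), if_neg (by omega)]
      rw [he, one_mul, if_neg (by omega), if_neg (by omega)]
    rw [Finset.sum_congr rfl hterm, Finset.sum_const, Nat.card_Ico, nsmul_eq_mul,
      Nat.cast_sub (by omega : 2 ≤ D)]
    rw [Finset.sum_range_succ, Finset.sum_range_succ, Finset.sum_range_zero]
    have he0 : etaTangent 0 0 = -1 := by simp [etaTangent]
    have he1 : etaTangent 1 1 = 0 := by simp [etaTangent]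
    rw [he0, he1, if_pos rfl, if_neg (by norm_num : ¬ (1:ℕ) = 0), if_pos rfl]
    push_cast
    ring
  -- the trace-free second fundamental form along the radial curve
  have hsigma : ∀ r : ℝ, 0 < r → ∀ μ ν : ℕ, μ ≤ D →
      sigmaTetrad D f gg s μ ν (Function.update x 1 r)
        = ((D:ℝ)-1)⁻¹ * ((2 * Real.sqrt (gg r))⁻¹ * (2 / r - deriv f r / f r)) * Mdiag D μ ν := by
    intro r hr μ ν hμ
    have hrne' : r ≠ 0 := ne_of_gt hr
    have hsqne : Real.sqrt (gg r) ≠ 0 := ne_of_gt (Real.sqrt_pos.mpr (hgg r hr))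
    have hfne : f r ≠ 0 := ne_of_gt (hf r hr)
    unfold sigmaTetrad Mdiag etaTangent
    by_cases h : μ = ν
    · subst h
      rw [if_pos rfl, if_pos rfl, if_pos rfl, hchi r hr μ hμ, htheta r hr]
      by_cases h0 : μ = 0
      · subst h0
        rw [if_pos rfl, if_pos rfl, if_pos rfl]
        field_simp
        ring
      · rw [if_neg h0, if_neg h0, if_neg h0]
        by_cases h1 : μ = 1
        · subst h1
          norm_num
        · rw [if_neg h1, if_neg h1]
          field_simp
          ring
    · rw [if_neg h, if_neg h, if_neg h]
      ring
  -- the photon-surface condition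
  have hpow2 : HasDerivAt (fun y : ℝ => y ^ 2) (2 * x 1) (x 1) := by
    simpa using hasDerivAt_pow 2 (x 1)
  have hF' : HasDerivAt (fun r => f r / r ^ 2)
      ((deriv f (x 1) * (x 1) ^ 2 - f (x 1) * (2 * x 1)) / ((x 1) ^ 2) ^ 2) (x 1) :=
    (hdf (x 1)).div hpow2 (pow_ne_zero 2 hrne)
  have hkey : deriv f (x 1) * x 1 = 2 * f (x 1) := by
    have h0 : (deriv f (x 1) * (x 1) ^ 2 - f (x 1) * (2 * x 1)) / ((x 1) ^ 2) ^ 2 = 0 := by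
      rw [← hF'.deriv]; exact hps
    rw [div_eq_zero_iff] at h0
    rcases h0 with h0 | h0
    · have h1 : (deriv f (x 1) * x 1 - 2 * f (x 1)) * x 1 = 0 := by linarith [h0]
      rcases mul_eq_zero.mp h1 with h2 | h2
      · linarith
      · exact absurd h2 hrne
    · exact absurd h0 (pow_ne_zero 2 (pow_ne_zero 2 hrne))
  -- second derivative of f r / r²
  have hG2 : ∀ r : ℝ, 0 < r → deriv (fun r => f r / r ^ 2) r
      = (deriv f r * r ^ 2 - 2 * f r * r) / r ^ 4 := by
    intro r hr
    have hp : HasDerivAt (fun y : ℝ => y ^ 2) (2 * r) r := by simpa using hasDerivAt_pow 2 r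
    have hd := (show HasDerivAt (fun r => f r / r ^ 2) _ r from
      (hdf r).div hp (pow_ne_zero 2 (ne_of_gt hr))).deriv
    rw [hd]
    rw [div_eq_div_iff (pow_ne_zero 2 (pow_ne_zero 2 (ne_of_gt hr))) (pow_ne_zero 4 (ne_of_gt hr))]
    ring
  have hTT : deriv (deriv (fun r => f r / r ^ 2)) (x 1)
      = (deriv (deriv f) (x 1) * (x 1) ^ 2 - 2 * f (x 1)) / (x 1) ^ 4 := by
    have he : deriv (fun r => f r / r ^ 2)
        =ᶠ[nhds (x 1)] (fun r => (deriv f r * r ^ 2 - 2 * f r * r) / r ^ 4) := by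
      filter_upwards [Ioi_mem_nhds hr0] with r hr using hG2 r hr
    rw [Filter.EventuallyEq.deriv_eq he]
    have hA : HasDerivAt (fun r => deriv f r * r ^ 2)
        (deriv (deriv f) (x 1) * (x 1) ^ 2 + deriv f (x 1) * (2 * x 1)) (x 1) :=
      (hdf' (x 1)).mul hpow2
    have hB : HasDerivAt (fun r => 2 * f r * r)
        (2 * deriv f (x 1) * x 1 + 2 * f (x 1) * 1) (x 1) :=
      ((hdf (x 1)).const_mul 2).mul (hasDerivAt_id (x 1))
    have hpow4 : HasDerivAt (fun y : ℝ => y ^ 4) (4 * (x 1) ^ 3) (x 1) := by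
      simpa using hasDerivAt_pow 4 (x 1)
    have hd := (show HasDerivAt (fun r => (deriv f r * r ^ 2 - 2 * f r * r) / r ^ 4) _ (x 1) from
      (hA.sub hB).div hpow4 (pow_ne_zero 4 hrne)).deriv
    simp only [Pi.sub_apply] at hd
    rw [hd, div_eq_div_iff (pow_ne_zero 2 (pow_ne_zero 4 hrne)) (pow_ne_zero 4 hrne)]
    linear_combination (-4 * (x 1) ^ 8) * hkey
  -- derivative of the σ-profile
  have h2s : (0:ℝ) < 2 * Real.sqrt (gg (x 1)) := by
    have := Real.sqrt_pos.mpr hgr0; linarith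
  have hsq : HasDerivAt (fun r => Real.sqrt (gg r))
      (deriv gg (x 1) / (2 * Real.sqrt (gg (x 1)))) (x 1) := hdg.sqrt (ne_of_gt hgr0)
  obtain ⟨a', hAder⟩ : ∃ a', HasDerivAt (fun r => (2 * Real.sqrt (gg r))⁻¹) a' (x 1) :=
    ⟨_, (hsq.const_mul 2).inv (ne_of_gt h2s)⟩
  have hBder : HasDerivAt (fun r => 2 / r - deriv f r / f r)
      ((0 * x 1 - 2 * 1) / (x 1) ^ 2
        - (deriv (deriv f) (x 1) * f (x 1) - deriv f (x 1) * deriv f (x 1)) / (f (x 1)) ^ 2)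
      (x 1) :=
    ((hasDerivAt_const (x 1) (2:ℝ)).div (hasDerivAt_id (x 1)) hrne).sub
      ((hdf' (x 1)).div (hdf (x 1)) (ne_of_gt hfr0))
  have hB0 : 2 / x 1 - deriv f (x 1) / f (x 1) = 0 := by
    rw [sub_eq_zero, div_eq_div_iff hrne (ne_of_gt hfr0)]
    linarith [hkey]
  have hQder := hAder.mul hBder
  rw [hB0] at hQder
  -- part 1
  have hmain : ∀ μ < D, ∀ ν < D,
      nablaNSigmaTetrad D f gg s μ ν x
        = - (2 * ((D : ℝ) - 1))⁻¹
            * (deriv (deriv (fun r => f r / r ^ 2)) (x 1) / (f (x 1) / (x 1) ^ 2))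
            * (gg (x 1))⁻¹ * Mdiag D μ ν := by
    intro μ hμ ν hν
    unfold nablaNSigmaTetrad
    have he : (fun r => sigmaTetrad D f gg s μ ν (Function.update x 1 r)) =ᶠ[nhds (x 1)]
        (fun r => ((D:ℝ)-1)⁻¹ * ((2 * Real.sqrt (gg r))⁻¹ * (2 / r - deriv f r / f r))
          * Mdiag D μ ν) := by
      filter_upwards [Ioi_mem_nhds hr0] with r hr using hsigma r hr μ ν (le_of_lt hμ)
    rw [Filter.EventuallyEq.deriv_eq he,
      (show HasDerivAt (fun r => ((D:ℝ)-1)⁻¹ * ((2 * Real.sqrt (gg r))⁻¹ * (2 / r - deriv f r / f r))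
          * Mdiag D μ ν) _ (x 1) from
        (hQder.const_mul (((D:ℝ)-1)⁻¹)).mul_const (Mdiag D μ ν)).deriv, hTT]
    have hf' : deriv f (x 1) = 2 * f (x 1) / x 1 := (eq_div_iff hrne).mpr hkey
    rw [hf']
    set u := Real.sqrt (gg (x 1)) with hudef
    have hupos : (0:ℝ) < u := Real.sqrt_pos.mpr hgr0
    have hu2 : gg (x 1) = u ^ 2 := (Real.sq_sqrt (le_of_lt hgr0)).symm
    rw [hu2]
    field_simp
    ring
  -- the M-sum over a null tangent
  have hMsum : ∀ k : ℕ → ℝ, NullTangentTetrad D k →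
      (∑ μ ∈ Finset.range D, ∑ ν ∈ Finset.range D, k μ * k ν * Mdiag D μ ν)
        = ((D:ℝ) - 1) * (k 0) ^ 2 := by
    intro k hk
    obtain ⟨hex, hk1, hhi, hnull⟩ := hk
    have hin : ∀ μ ∈ Finset.range D,
        (∑ ν ∈ Finset.range D, k μ * k ν * Mdiag D μ ν) = k μ * k μ * Mdiag D μ μ := by
      intro μ hμ
      rw [Finset.sum_eq_single μ]
      · intro ν _ hν
        have hne : ¬ μ = ν := fun h => hν h.symm
        simp [Mdiag, hne]
      · intro h; exact absurd hμ h
    rw [Finset.sum_congr rfl hin]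
    have h0mem : (0:ℕ) ∈ Finset.range D := Finset.mem_range.mpr (by omega)
    rw [← Finset.add_sum_erase _ _ h0mem]
    have hterm : ∀ μ ∈ (Finset.range D).erase 0, k μ * k μ * Mdiag D μ μ = k μ ^ 2 := by
      intro μ hμ
      have hμ0 : μ ≠ 0 := (Finset.mem_erase.mp hμ).1
      by_cases h1 : μ = 1
      · subst h1; rw [hk1]; ring
      · have hM : Mdiag D μ μ = 1 := by
          unfold Mdiag; rw [if_pos rfl, if_neg hμ0, if_neg h1]
        rw [hM]; ring
    rw [Finset.sum_congr rfl hterm, hnull]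
    have hM0 : Mdiag D 0 0 = (D:ℝ) - 2 := by unfold Mdiag; norm_num
    rw [hM0]; ring
  have hk0ne : ∀ k : ℕ → ℝ, NullTangentTetrad D k → k 0 ≠ 0 := by
    intro k hk h0
    obtain ⟨⟨μ0, hμ0D, hμ0ne⟩, hk1, hhi, hnull⟩ := hk
    rw [h0] at hnull
    have hz : ∀ μ ∈ (Finset.range D).erase 0, k μ ^ 2 = 0 :=
      (Finset.sum_eq_zero_iff_of_nonneg (fun i _ => sq_nonneg (k i))).mp
        (by rw [hnull]; norm_num)
    rcases Nat.eq_zero_or_pos μ0 with h | h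
    · exact hμ0ne (h ▸ h0)
    · have hmem : μ0 ∈ (Finset.range D).erase 0 :=
        Finset.mem_erase.mpr ⟨by omega, Finset.mem_range.mpr hμ0D⟩
      exact hμ0ne ((pow_eq_zero_iff (two_ne_zero)).mp (hz μ0 hmem))
  have hksq : ∀ k : ℕ → ℝ, NullTangentTetrad D k → 0 < (k 0) ^ 2 := by
    intro k hk
    exact lt_of_le_of_ne (sq_nonneg _) (Ne.symm (pow_ne_zero 2 (hk0ne k hk)))
  have hMpos : ∀ k : ℕ → ℝ, NullTangentTetrad D k →
      0 < ∑ μ ∈ Finset.range D, ∑ ν ∈ Finset.range D, k μ * k ν * Mdiag D μ ν := by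
    intro k hk
    rw [hMsum k hk]
    exact mul_pos hDpos (hksq k hk)
  -- the null-contracted normal derivative of σ
  obtain ⟨T, hTdef⟩ : ∃ T : ℝ, T = deriv (deriv (fun r => f r / r ^ 2)) (x 1) := ⟨_, rfl⟩
  obtain ⟨C1, hC1def⟩ : ∃ c : ℝ,
      c = -((2 * ((D:ℝ) - 1))⁻¹ / (f (x 1) / (x 1) ^ 2) * (gg (x 1))⁻¹) := ⟨_, rfl⟩
  have hC1neg : C1 < 0 := by
    have hF0 : 0 < f (x 1) / (x 1) ^ 2 := div_pos hfr0 (pow_pos hr0 2)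
    have h1 : 0 < (2 * ((D:ℝ) - 1))⁻¹ := inv_pos.mpr (by linarith)
    have h2 : 0 < (gg (x 1))⁻¹ := inv_pos.mpr hgr0
    have h3 := mul_pos (div_pos h1 hF0) h2
    rw [hC1def]; linarith
  have hsum : ∀ k : ℕ → ℝ, NullTangentTetrad D k →
      (∑ μ ∈ Finset.range D, ∑ ν ∈ Finset.range D,
        k μ * k ν * nablaNSigmaTetrad D f gg s μ ν x)
        = (C1 * T) * (((D:ℝ) - 1) * (k 0) ^ 2) := by
    intro k hk
    have h1 : ∀ μ ∈ Finset.range D, ∀ ν ∈ Finset.range D,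
        k μ * k ν * nablaNSigmaTetrad D f gg s μ ν x
          = (C1 * T) * (k μ * k ν * Mdiag D μ ν) := by
      intro μ hμ ν hν
      rw [hmain μ (Finset.mem_range.mp hμ) ν (Finset.mem_range.mp hν), hC1def, hTdef]
      ring
    calc (∑ μ ∈ Finset.range D, ∑ ν ∈ Finset.range D,
          k μ * k ν * nablaNSigmaTetrad D f gg s μ ν x)
        = ∑ μ ∈ Finset.range D, ∑ ν ∈ Finset.range D,
            (C1 * T) * (k μ * k ν * Mdiag D μ ν) :=
          Finset.sum_congr rfl fun μ hμ => Finset.sum_congr rfl fun ν hν => h1 μ hμ ν hν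
      _ = (C1 * T) * ∑ μ ∈ Finset.range D, ∑ ν ∈ Finset.range D,
            k μ * k ν * Mdiag D μ ν := by
          rw [Finset.mul_sum]
          exact Finset.sum_congr rfl fun μ _ => (Finset.mul_sum _ _ _).symm
      _ = (C1 * T) * (((D:ℝ) - 1) * (k 0) ^ 2) := by rw [hMsum k hk]
  -- a concrete null tangent vector
  have hwit : NullTangentTetrad D (fun μ => if μ = 0 then (1:ℝ) else if μ = 2 then 1 else 0) := by
    refine ⟨⟨0, by omega, by norm_num⟩, by norm_num, fun μ hμ => ?_, ?_⟩
    · have h0 : μ ≠ 0 := by omega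
      have h2 : μ ≠ 2 := by omega
      simp [h0, h2]
    · have h2mem : (2:ℕ) ∈ (Finset.range D).erase 0 :=
        Finset.mem_erase.mpr ⟨by norm_num, Finset.mem_range.mpr (by omega)⟩
      rw [Finset.sum_eq_single_of_mem 2 h2mem]
      · norm_num
      · intro ν hν hν2
        have hν0 : ν ≠ 0 := (Finset.mem_erase.mp hν).1
        simp [hν0, hν2]
  have hw1 : ((fun μ => if μ = 0 then (1:ℝ) else if μ = 2 then 1 else 0) 0) = 1 := by norm_num
  refine ⟨hmain, hMpos, ?_, ?_, ?_⟩
  · rw [← hTdef]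
    constructor
    · intro hall
      have h := hall _ hwit
      rw [hsum _ hwit] at h
      have hwpos : (0:ℝ) < ((D:ℝ) - 1) * ((fun μ => if μ = 0 then (1:ℝ) else if μ = 2 then 1 else 0) 0) ^ 2 :=
        mul_pos hDpos (hksq _ hwit)
      have h' : (C1 * T) * (((D:ℝ) - 1) * ((fun μ => if μ = 0 then (1:ℝ) else if μ = 2 then 1 else 0) 0) ^ 2) < 0 * (((D:ℝ) - 1) * ((fun μ => if μ = 0 then (1:ℝ) else if μ = 2 then 1 else 0) 0) ^ 2) := by
        rwa [zero_mul]
      have hCT : C1 * T < 0 := lt_of_mul_lt_mul_right h' (le_of_lt hwpos)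
      have h2 := div_pos_of_neg_of_neg hCT hC1neg
      rwa [mul_div_cancel_left₀ _ (ne_of_lt hC1neg)] at h2
    · intro hT k hk
      rw [hsum k hk]
      exact mul_neg_of_neg_of_pos (mul_neg_of_neg_of_pos hC1neg hT)
        (mul_pos hDpos (hksq k hk))
  · rw [← hTdef]
    constructor
    · intro hall
      have h := hall _ hwit
      rw [hsum _ hwit] at h
      have hwpos : (0:ℝ) < ((D:ℝ) - 1) * ((fun μ => if μ = 0 then (1:ℝ) else if μ = 2 then 1 else 0) 0) ^ 2 :=
        mul_pos hDpos (hksq _ hwit)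
      have h' : 0 * (((D:ℝ) - 1) * ((fun μ => if μ = 0 then (1:ℝ) else if μ = 2 then 1 else 0) 0) ^ 2) < (C1 * T) * (((D:ℝ) - 1) * ((fun μ => if μ = 0 then (1:ℝ) else if μ = 2 then 1 else 0) 0) ^ 2) := by
        rwa [zero_mul]
      have hCT : 0 < C1 * T := lt_of_mul_lt_mul_right h' (le_of_lt hwpos)
      have h2 := div_neg_of_pos_of_neg hCT hC1neg
      rwa [mul_div_cancel_left₀ _ (ne_of_lt hC1neg)] at h2
    · intro hT k hk
      rw [hsum k hk]
      exact mul_pos (mul_pos_of_neg_of_neg hC1neg hT) (mul_pos hDpos (hksq k hk))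
  · rw [← hTdef]
    constructor
    · intro hall
      have h := hall _ hwit
      rw [hsum _ hwit] at h
      have hwpos : (0:ℝ) < ((D:ℝ) - 1) * ((fun μ => if μ = 0 then (1:ℝ) else if μ = 2 then 1 else 0) 0) ^ 2 :=
        mul_pos hDpos (hksq _ hwit)
      rcases mul_eq_zero.mp h with h' | h'
      · rcases mul_eq_zero.mp h' with h'' | h''
        · exact absurd h'' (ne_of_lt hC1neg)
        · exact h''
      · exact absurd h' (ne_of_gt hwpos)
    · intro hT k hk
      rw [hsum k hk, hT]
      ring
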